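/- Let R ∈ ℂ^{n×n} be Hermitian positive semidefinite and B ∈ ℂ^{n×m} of rank m. Let N(R) denote the null space of R and R(B) the column space of B. Then B* Π_{N(R)} B is invertible if and only if the directed gap δ(R(B), N(R)) := ‖ Π_{N(R)^⊥} restricted to R(B) ‖ is strictly less than 1. -/

import Mathlib

open Matrix ComplexOrder

set_option maxHeartbeats 1000000 in
/-- `B* Π_{N(R)} B` is invertible iff the directed gap
`δ(R(B), N(R)) = ‖Π_{N(R)^⊥}|_{R(B)}‖ < 1`, expressed here as the existence of a
contraction constant `c < 1` bounding `‖(I - P) y‖ ≤ c ‖y‖` for all `y` in the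
range of `B` (Euclidean norms). -/
theorem stmt_5 {n m : ℕ} (R : Matrix (Fin n) (Fin n) ℂ) (hR : R.PosSemidef)
    (B : Matrix (Fin n) (Fin m) ℂ) (hB : B.rank = m)
    (P : Matrix (Fin n) (Fin n) ℂ) (hPh : P.IsHermitian) (hPP : P * P = P)
    (hPrange : ∀ x : Fin n → ℂ, R *ᵥ x = 0 ↔ P *ᵥ x = x) :
    IsUnit (Bᴴ * P * B) ↔
      ∃ c : ℝ, c < 1 ∧ ∀ v : EuclideanSpace ℂ (Fin m),
        ‖Matrix.toEuclideanLin (1 - P) (Matrix.toEuclideanLin B v)‖ ≤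
          c * ‖Matrix.toEuclideanLin B v‖ := by
  classical
  have hsub : ∀ y : EuclideanSpace ℂ (Fin n),
      Matrix.toEuclideanLin (1 - P) y = y - Matrix.toEuclideanLin P y := by
    intro y; simp [Matrix.toEuclideanLin_apply, sub_mulVec, one_mulVec]
  have hTT : ∀ y : EuclideanSpace ℂ (Fin n),
      Matrix.toEuclideanLin P (Matrix.toEuclideanLin P y) = Matrix.toEuclideanLin P y := by
    intro y; simp [Matrix.toEuclideanLin_apply, mulVec_mulVec, hPP]
  have hsym := Matrix.isHermitian_iff_isSymmetric.mp hPh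
  have hinner : ∀ y : EuclideanSpace ℂ (Fin n),
      (inner ℂ (y - Matrix.toEuclideanLin P y) (Matrix.toEuclideanLin P y) : ℂ) = 0 := by
    intro y
    have h1 := hsym y (Matrix.toEuclideanLin P y)
    rw [hTT] at h1
    rw [inner_sub_left, ← h1, sub_self]
  have hpyth : ∀ y : EuclideanSpace ℂ (Fin n),
      ‖y - Matrix.toEuclideanLin P y‖ ^ 2 + ‖Matrix.toEuclideanLin P y‖ ^ 2 = ‖y‖ ^ 2 := by
    intro y
    have h := norm_add_sq_eq_norm_sq_add_norm_sq_of_inner_eq_zero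
      (y - Matrix.toEuclideanLin P y) (Matrix.toEuclideanLin P y) (hinner y)
    rw [sub_add_cancel] at h
    rw [pow_two, pow_two, pow_two]
    linarith
  -- injectivity of B
  have hBinj : ∀ v : Fin m → ℂ, B *ᵥ v = 0 → v = 0 := by
    intro v hv
    have hrn := LinearMap.finrank_range_add_finrank_ker B.mulVecLin
    rw [show Module.finrank ℂ (LinearMap.range B.mulVecLin) = m from hB] at hrn
    have hfin : Module.finrank ℂ (Fin m → ℂ) = m := by simp
    rw [hfin] at hrn
    have hker0 : Module.finrank ℂ (LinearMap.ker B.mulVecLin) = 0 := by omega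
    have hbot : LinearMap.ker B.mulVecLin = ⊥ :=
      Submodule.finrank_eq_zero.mp hker0
    have : v ∈ LinearMap.ker B.mulVecLin := by
      simpa [Matrix.mulVecLin_apply] using hv
    simpa [hbot] using this
  have hBEinj : ∀ v : EuclideanSpace ℂ (Fin m),
      Matrix.toEuclideanLin B v = 0 → v = 0 := by
    intro v hv
    rw [Matrix.toEuclideanLin_apply] at hv
    have h0 : B *ᵥ (WithLp.equiv 2 (Fin m → ℂ)) v = 0 := by
      have := congrArg (WithLp.equiv 2 (Fin n → ℂ)) hv
      simpa using this
    have := hBinj _ h0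
    have := congrArg (WithLp.equiv 2 (Fin m → ℂ)).symm this
    simpa using this
  constructor
  · -- forward
    intro hU
    rcases Nat.eq_zero_or_pos m with hm | hm
    · refine ⟨0, by norm_num, ?_⟩
      intro v
      subst hm
      have hv : v = 0 := Subsingleton.elim v 0
      simp [hv]
    · have hMinj := Matrix.mulVec_injective_iff_isUnit.mpr hU
      have hPBne : ∀ v : EuclideanSpace ℂ (Fin m), v ≠ 0 →
          Matrix.toEuclideanLin P (Matrix.toEuclideanLin B v) ≠ 0 := by
        intro v hv hc
        rw [Matrix.toEuclideanLin_apply, Matrix.toEuclideanLin_apply] at hc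
        have h0 : P *ᵥ (B *ᵥ (WithLp.equiv 2 (Fin m → ℂ)) v) = 0 := by
          have := congrArg (WithLp.equiv 2 (Fin n → ℂ)) hc
          simpa using this
        have h1 : (Bᴴ * P * B) *ᵥ (WithLp.equiv 2 (Fin m → ℂ)) v = 0 := by
          rw [← Matrix.mulVec_mulVec, ← Matrix.mulVec_mulVec, h0, Matrix.mulVec_zero]
        have h2 : (Bᴴ * P * B) *ᵥ (WithLp.equiv 2 (Fin m → ℂ)) v = (Bᴴ * P * B) *ᵥ 0 := by
          simpa using h1
        have h3 := hMinj h2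
        apply hv
        have := congrArg (WithLp.equiv 2 (Fin m → ℂ)).symm h3
        simpa using this
      have hstrict : ∀ v : EuclideanSpace ℂ (Fin m), v ≠ 0 →
          ‖Matrix.toEuclideanLin (1 - P) (Matrix.toEuclideanLin B v)‖ <
            ‖Matrix.toEuclideanLin B v‖ := by
        intro v hv
        have hp := hpyth (Matrix.toEuclideanLin B v)
        have hpos : 0 < ‖Matrix.toEuclideanLin P (Matrix.toEuclideanLin B v)‖ :=
          norm_pos_iff.mpr (hPBne v hv)
        rw [hsub]
        nlinarith [norm_nonneg (Matrix.toEuclideanLin B v -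
          Matrix.toEuclideanLin P (Matrix.toEuclideanLin B v)),
          norm_nonneg (Matrix.toEuclideanLin B v)]
      -- compactness
      have hc2 : Continuous (fun v : EuclideanSpace ℂ (Fin m) => Matrix.toEuclideanLin B v) :=
        (Matrix.toEuclideanLin B).continuous_of_finiteDimensional
      have hcP : Continuous (fun y : EuclideanSpace ℂ (Fin n) =>
          Matrix.toEuclideanLin (1 - P) y) :=
        (Matrix.toEuclideanLin (1 - P)).continuous_of_finiteDimensional
      have hc1 : Continuous (fun v : EuclideanSpace ℂ (Fin m) =>
          Matrix.toEuclideanLin (1 - P) (Matrix.toEuclideanLin B v)) :=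
        hcP.comp hc2
      set S := Metric.sphere (0 : EuclideanSpace ℂ (Fin m)) 1 with hS
      have hSne : S.Nonempty := by
        refine ⟨EuclideanSpace.single ⟨0, hm⟩ 1, ?_⟩
        simp [hS, EuclideanSpace.norm_single]
      have hScp : IsCompact S := isCompact_sphere (0 : EuclideanSpace ℂ (Fin m)) 1
      have hnz : ∀ v ∈ S, Matrix.toEuclideanLin B v ≠ 0 := by
        intro v hv hc
        have : v ≠ 0 := by
          intro h0
          rw [hS, mem_sphere_zero_iff_norm, h0] at hv
          simpa using hv
        exact this (hBEinj v hc)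
      have hcont : ContinuousOn (fun v : EuclideanSpace ℂ (Fin m) =>
          ‖Matrix.toEuclideanLin (1 - P) (Matrix.toEuclideanLin B v)‖ /
            ‖Matrix.toEuclideanLin B v‖) S := by
        apply ContinuousOn.div hc1.norm.continuousOn hc2.norm.continuousOn
        intro v hv
        exact norm_ne_zero_iff.mpr (hnz v hv)
      obtain ⟨v₀, hv₀S, hmax⟩ := hScp.exists_isMaxOn hSne hcont
      have hv₀ne : v₀ ≠ 0 := by
        intro h0
        rw [hS, mem_sphere_zero_iff_norm, h0] at hv₀S
        simpa using hv₀S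
      have hB₀pos : 0 < ‖Matrix.toEuclideanLin B v₀‖ :=
        norm_pos_iff.mpr (hnz v₀ hv₀S)
      refine ⟨‖Matrix.toEuclideanLin (1 - P) (Matrix.toEuclideanLin B v₀)‖ /
        ‖Matrix.toEuclideanLin B v₀‖, ?_, ?_⟩
      · exact (div_lt_one hB₀pos).mpr (hstrict v₀ hv₀ne)
      · intro v
        by_cases hv : v = 0
        · simp [hv]
        · set u : EuclideanSpace ℂ (Fin m) := ((‖v‖ : ℂ))⁻¹ • v with hu
          have hnv : (0:ℝ) < ‖v‖ := norm_pos_iff.mpr hv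
          have hnc : ‖((‖v‖ : ℂ))⁻¹‖ = ‖v‖⁻¹ := by
            simp [abs_of_nonneg (le_of_lt hnv)]
          have hun : ‖u‖ = 1 := by
            rw [hu, norm_smul, hnc]
            field_simp
          have huS : u ∈ S := by rw [hS, mem_sphere_zero_iff_norm]; exact hun
          have h1 : ‖Matrix.toEuclideanLin (1 - P) (Matrix.toEuclideanLin B u)‖ /
              ‖Matrix.toEuclideanLin B u‖ ≤
              ‖Matrix.toEuclideanLin (1 - P) (Matrix.toEuclideanLin B v₀)‖ /
              ‖Matrix.toEuclideanLin B v₀‖ := hmax huS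
          have hBu : Matrix.toEuclideanLin B u = ((‖v‖ : ℂ))⁻¹ • Matrix.toEuclideanLin B v := by
            rw [hu, _root_.map_smul]
          have hAu : Matrix.toEuclideanLin (1 - P) (Matrix.toEuclideanLin B u)
              = ((‖v‖ : ℂ))⁻¹ • Matrix.toEuclideanLin (1 - P) (Matrix.toEuclideanLin B v) := by
            rw [hBu, _root_.map_smul]
          have hBun : ‖Matrix.toEuclideanLin B u‖ = ‖v‖⁻¹ * ‖Matrix.toEuclideanLin B v‖ := by
            rw [hBu, norm_smul, hnc]
          have hAun : ‖Matrix.toEuclideanLin (1 - P) (Matrix.toEuclideanLin B u)‖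
              = ‖v‖⁻¹ * ‖Matrix.toEuclideanLin (1 - P) (Matrix.toEuclideanLin B v)‖ := by
            rw [hAu, norm_smul, hnc]
          have hBupos : 0 < ‖Matrix.toEuclideanLin B u‖ :=
            norm_pos_iff.mpr (hnz u huS)
          have h2 : ‖Matrix.toEuclideanLin (1 - P) (Matrix.toEuclideanLin B u)‖ ≤
              (‖Matrix.toEuclideanLin (1 - P) (Matrix.toEuclideanLin B v₀)‖ /
                ‖Matrix.toEuclideanLin B v₀‖) * ‖Matrix.toEuclideanLin B u‖ :=
            (div_le_iff₀ hBupos).mp h1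
          rw [hAun, hBun] at h2
          set c0 : ℝ := ‖Matrix.toEuclideanLin (1 - P) (Matrix.toEuclideanLin B v₀)‖ /
            ‖Matrix.toEuclideanLin B v₀‖ with hc0
          have hmono := mul_le_mul_of_nonneg_left h2 (le_of_lt hnv)
          calc ‖Matrix.toEuclideanLin (1 - P) (Matrix.toEuclideanLin B v)‖
              = ‖v‖ * (‖v‖⁻¹ * ‖Matrix.toEuclideanLin (1 - P) (Matrix.toEuclideanLin B v)‖) := by
                field_simp
            _ ≤ ‖v‖ * (c0 * (‖v‖⁻¹ * ‖Matrix.toEuclideanLin B v‖)) := hmono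
            _ = c0 * ‖Matrix.toEuclideanLin B v‖ := by field_simp
  · -- reverse
    rintro ⟨c, hc, hcb⟩
    rw [← Matrix.mulVec_injective_iff_isUnit]
    have hker : ∀ v : Fin m → ℂ, (Bᴴ * P * B) *ᵥ v = 0 → v = 0 := by
      intro v hv
      have h1 : star (B *ᵥ v) ⬝ᵥ (P *ᵥ (B *ᵥ v)) = 0 := by
        rw [star_mulVec, ← dotProduct_mulVec, mulVec_mulVec, mulVec_mulVec, hv, dotProduct_zero]
      have h2 : P *ᵥ (B *ᵥ v) = 0 := by
        have h3 : star (P *ᵥ (B *ᵥ v)) ⬝ᵥ (P *ᵥ (B *ᵥ v)) = 0 := by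
          rw [star_mulVec, hPh.eq, ← dotProduct_mulVec, mulVec_mulVec, hPP, h1]
        exact dotProduct_star_self_eq_zero.mp h3
      set ve : EuclideanSpace ℂ (Fin m) := (WithLp.equiv 2 (Fin m → ℂ)).symm v with hve
      have hPBv : Matrix.toEuclideanLin P (Matrix.toEuclideanLin B ve) = 0 := by
        rw [Matrix.toEuclideanLin_apply, Matrix.toEuclideanLin_apply]
        simp [hve, h2]
      have heq : Matrix.toEuclideanLin (1 - P) (Matrix.toEuclideanLin B ve)
          = Matrix.toEuclideanLin B ve := by
        rw [hsub, hPBv, sub_zero]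
      have hb := hcb ve
      rw [heq] at hb
      have h0 : ‖Matrix.toEuclideanLin B ve‖ = 0 := by
        nlinarith [norm_nonneg (Matrix.toEuclideanLin B ve)]
      have h4 : Matrix.toEuclideanLin B ve = 0 := norm_eq_zero.mp h0
      have h5 := hBEinj ve h4
      rw [hve] at h5
      have := congrArg (WithLp.equiv 2 (Fin m → ℂ)) h5
      simpa using this
    intro x y hxy
    have hd : (Bᴴ * P * B) *ᵥ (x - y) = 0 := by
      rw [Matrix.mulVec_sub, hxy, sub_self]
    exact sub_eq_zero.mp (hker _ hd)
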